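/- Let S be a densely defined, closed, symmetric operator in H with S ≥ εI for some ε > 0, and let S_F, S_K denote its Friedrichs and Krein–von Neumann extensions. If μ_{F,j} and μ_{K,j} denote the j-th min-max values (counting multiplicity) of S_F and of the reduced Krein operator Ŝ_K = S_K|_{[ker S_K]^⊥}, respectively, then ε ≤ μ_{F,j} ≤ μ_{K,j} for all j ∈ ℕ. In particular, if S_F has purely discrete spectrum, then S_K has purely discrete spectrum in (0, ∞). -/

import Mathlib

open scoped ComplexInnerProductSpace
open Filter

noncomputable section

variable {H : Type*} [NormedAddCommGroup H] [InnerProductSpace ℂ H] [CompleteSpace H]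


/-- In a non-finite-dimensional submodule one finds finite-dimensional submodules
of every finite rank. -/
lemma aux_exists_finrank (D : Submodule ℂ H) (hD : ¬ FiniteDimensional ℂ D) (j : ℕ) :
    ∃ W : Submodule ℂ H, W ≤ D ∧ FiniteDimensional ℂ W ∧ Module.finrank ℂ ↥W = j := by
  induction j with
  | zero => exact ⟨⊥, bot_le, inferInstance, finrank_bot ℂ H⟩
  | succ j ih =>
    obtain ⟨W, hWD, hfin, hj⟩ := ih
    have hex : ∃ x ∈ D, x ∉ W := by
      by_contra hcon
      push_neg at hcon
      exact hD (Submodule.finiteDimensional_of_le (fun x hx => hcon x hx))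
    obtain ⟨x, hxD, hxW⟩ := hex
    have hx0 : x ≠ 0 := fun h => hxW (h ▸ W.zero_mem)
    have hint : W ⊓ (ℂ ∙ x) = ⊥ := by
      rw [eq_bot_iff]
      rintro y ⟨hyW, hy⟩
      obtain ⟨c, rfl⟩ := Submodule.mem_span_singleton.mp hy
      rcases eq_or_ne c 0 with rfl | hc
      · simp
      · exact absurd (by simpa [smul_smul, inv_mul_cancel₀ hc] using W.smul_mem c⁻¹ hyW) hxW
    refine ⟨W ⊔ (ℂ ∙ x), sup_le hWD (by rwa [Submodule.span_singleton_le_iff_mem]),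
      inferInstance, ?_⟩
    have h1 := Submodule.finrank_sup_add_finrank_inf_eq W (ℂ ∙ x)
    rw [hint, hj, finrank_span_singleton hx0] at h1
    simpa using h1

/-- On a finite-dimensional subspace of the domain, the Rayleigh quotient is bounded. -/
lemma aux_bound (T : H →ₗ.[ℂ] H) (W : Submodule ℂ H) (hWT : W ≤ T.domain)
    [FiniteDimensional ℂ W] :
    ∃ c : ℝ, ∀ (x : H) (hx : x ∈ T.domain), x ∈ W → (⟪x, T ⟨x, hx⟩⟫).re ≤ c * ‖x‖ ^ 2 := by
  let L : ↥W →ₗ[ℂ] H := T.toFun.comp (Submodule.inclusion hWT)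
  let L' : ↥W →L[ℂ] H := ⟨L, L.continuous_of_finiteDimensional⟩
  refine ⟨‖L'‖, ?_⟩
  intro x hx hxW
  have hTx : T ⟨x, hx⟩ = L' ⟨x, hxW⟩ := rfl
  have hn : ‖(⟨x, hxW⟩ : ↥W)‖ = ‖x‖ := rfl
  have h1 : (⟪x, L' ⟨x, hxW⟩⟫).re ≤ ‖x‖ * ‖L' ⟨x, hxW⟩‖ := by
    simpa [RCLike.re_to_complex] using re_inner_le_norm (𝕜 := ℂ) x (L' ⟨x, hxW⟩)
  have h2 : ‖L' ⟨x, hxW⟩‖ ≤ ‖L'‖ * ‖x‖ := by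
    simpa [hn] using L'.le_opNorm ⟨x, hxW⟩
  have hx0 : (0:ℝ) ≤ ‖x‖ := norm_nonneg x
  rw [hTx]
  nlinarith [h1, h2]


/-- The kernel of the adjoint `S*` of a densely defined operator `S`,
described as `{v | ∀ u ∈ dom S, ⟪S u, v⟫ = 0}`. -/
def adjKerD (S : H →ₗ.[ℂ] H) : Submodule ℂ H where
  carrier := {v | ∀ u : S.domain, ⟪S u, v⟫ = 0}
  add_mem' := by
    intro a b ha hb u
    rw [inner_add_right, ha u, hb u, add_zero]
  zero_mem' := by
    intro u; exact inner_zero_right _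
  smul_mem' := by
    intro c a ha u
    rw [inner_smul_right, ha u, mul_zero]

/-- The `j`-th min-max value of an operator `T` over a subspace `D` of its domain:
`inf` over `j`-dimensional subspaces `W ⊆ D` of the supremum of the Rayleigh quotient
`Re ⟪x, T x⟫ / ‖x‖²` on `W`, encoded as the infimum of all `c` such that some
`j`-dimensional `W ⊆ D` satisfies `Re ⟪x, T x⟫ ≤ c ‖x‖²` on `W`. For a semibounded
self-adjoint operator this agrees with `μ_{T,j} = inf {λ | dim ran E_T((−∞,λ)) ≥ j}`. -/
def minmaxVal (T : H →ₗ.[ℂ] H) (D : Submodule ℂ H) (j : ℕ) : ℝ :=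
  sInf {c : ℝ | ∃ W : Submodule ℂ H, W ≤ D ∧ Module.finrank ℂ ↥W = j ∧
    ∀ (x : H) (hx : x ∈ T.domain), x ∈ W → (⟪x, T ⟨x, hx⟩⟫).re ≤ c * ‖x‖ ^ 2}

/-- Theorem 2.10: Let `S` be densely defined, closed, symmetric with
`S ≥ ε·I`, `ε > 0`, in an infinite-dimensional Hilbert space, and let `S_F`, `S_K` be the
Friedrichs and Krein–von Neumann extensions. With `μ_{F,j}` and `μ_{K,j}` the `j`-th
min-max values of `S_F` and of the reduced Krein operator
`Ŝ_K = S_K|_{(ker S_K)ᗮ}` (domain `dom S_K ∩ (ker S*)ᗮ`), one has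
`ε ≤ μ_{F,j} ≤ μ_{K,j}` for all `j ≥ 1`. In particular, if `S_F` has purely discrete
spectrum (`μ_{F,j} → ∞`), then `S_K` has purely discrete spectrum in `(0, ∞)`
(`μ_{K,j} → ∞`). -/
theorem stmt_9 (S S_F S_K : H →ₗ.[ℂ] H)
    (hinf : ¬ FiniteDimensional ℂ H)
    (hdense : Dense (S.domain : Set H))
    (hclosed : S.IsClosed)
    (hsym : ∀ u v : S.domain, ⟪S u, (v : H)⟫ = ⟪(u : H), S v⟫)
    (ε : ℝ) (hε : 0 < ε)
    (hbound : ∀ u : S.domain, ε * ‖(u : H)‖ ^ 2 ≤ (⟪(u : H), S u⟫).re)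
    (hFext : S ≤ S_F)
    (hFadj : ∀ (v : S_F.domain) (u : S.domain), ⟪S u, (v : H)⟫ = ⟪(u : H), S_F v⟫)
    (hFbound : ∀ v : S_F.domain, ε * ‖(v : H)‖ ^ 2 ≤ (⟪(v : H), S_F v⟫).re)
    (hKext : S ≤ S_K)
    (hKadj : ∀ (v : S_K.domain) (u : S.domain), ⟪S u, (v : H)⟫ = ⟪(u : H), S_K v⟫)
    (hKnn : ∀ v : S_K.domain, 0 ≤ (⟪(v : H), S_K v⟫).re)
    (hdomK : S_K.domain = S.domain ⊔ adjKerD S) :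
    (∀ j : ℕ, 1 ≤ j →
      ε ≤ minmaxVal S_F S_F.domain j ∧
        minmaxVal S_F S_F.domain j ≤ minmaxVal S_K (S_K.domain ⊓ (adjKerD S)ᗮ) j) ∧
    (Filter.Tendsto (fun j => minmaxVal S_F S_F.domain j) Filter.atTop Filter.atTop →
      Filter.Tendsto (fun j => minmaxVal S_K (S_K.domain ⊓ (adjKerD S)ᗮ) j)
        Filter.atTop Filter.atTop) := by
  set K : Submodule ℂ H := adjKerD S with hK
  have hKmem : ∀ v : H, v ∈ K ↔ ∀ u : S.domain, ⟪S u, v⟫ = 0 := fun v => Iff.rfl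
  have hKclosed : IsClosed (K : Set H) := by
    have : (K : Set H) = ⋂ u : S.domain, {v : H | ⟪S u, v⟫ = 0} := by
      ext v; simp [hKmem, Set.mem_iInter]
    rw [this]
    exact isClosed_iInter fun u =>
      isClosed_eq (continuous_const.inner continuous_id) continuous_const
  haveI : CompleteSpace K := hKclosed.completeSpace_coe
  -- the domain of `S` intersects `ker S*` trivially
  have hDK : ∀ x : H, x ∈ S.domain → x ∈ K → x = 0 := by
    intro x hx hk
    have h1 := hbound ⟨x, hx⟩
    have h2 : ⟪(x : H), S ⟨x, hx⟩⟫ = 0 := by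
      rw [← inner_conj_symm]
      rw [hKmem] at hk
      rw [hk ⟨x, hx⟩]; simp
    rw [h2] at h1
    simp only [Complex.zero_re] at h1
    have h3 : ‖x‖ ^ 2 ≤ 0 := by by_contra hc; push_neg at hc; nlinarith
    have h4 : ‖x‖ ^ 2 = 0 := le_antisymm h3 (sq_nonneg _)
    exact norm_eq_zero.mp ((pow_eq_zero_iff two_ne_zero).mp h4)
  have huniq : ∀ v u u' : H, u ∈ S.domain → u' ∈ S.domain →
      v - u ∈ K → v - u' ∈ K → u = u' := by
    intro v u u' hu hu' hk hk'
    have h1 : u - u' ∈ K := by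
      have := K.sub_mem hk' hk
      simpa using this
    have h2 : u - u' ∈ S.domain := S.domain.sub_mem hu hu'
    exact sub_eq_zero.mp (hDK _ h2 h1)
  -- `S_K` vanishes on `ker S*`
  have hK0 : ∀ w : S_K.domain, (w : H) ∈ K → S_K w = 0 := by
    intro w hw
    refine hdense.eq_zero_of_inner_right ℂ fun u hu => ?_
    rw [← hKadj w ⟨u, hu⟩]
    exact (hKmem _).mp hw ⟨u, hu⟩
  -- `S.domain` is infinite dimensional
  have hD0inf : ¬ FiniteDimensional ℂ S.domain := by
    intro hfin
    have hcl : IsClosed (S.domain : Set H) := Submodule.closed_of_finiteDimensional S.domain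
    have htop : S.domain = ⊤ := by
      rw [Submodule.eq_top_iff']
      intro x
      have : x ∈ closure (S.domain : Set H) := by rw [hdense.closure_eq]; trivial
      rwa [hcl.closure_eq] at this
    rw [htop] at hfin
    exact hinf (Submodule.topEquiv.finiteDimensional)
  -- the reduced Krein domain is infinite dimensional
  set M : Submodule ℂ H := S_K.domain ⊓ Kᗮ with hM
  have hMinf : ¬ FiniteDimensional ℂ M := by
    intro hfin
    let φ : ↥S.domain →ₗ[ℂ] H :=
      { toFun := fun u => (u : H) - (K.orthogonalProjection (u : H) : H)
        map_add' := by intro a b; simp [map_add]; abel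
        map_smul' := by intro c a; simp [map_smul, smul_sub] }
    have hφmem : ∀ u : ↥S.domain, φ u ∈ M := by
      intro u
      refine Submodule.mem_inf.mpr ⟨?_, Submodule.sub_starProjection_mem_orthogonal (K := K) (u : H)⟩
      rw [hdomK]
      show (u : H) - (K.orthogonalProjection (u : H) : H) ∈ _
      rw [sub_eq_add_neg]
      exact Submodule.add_mem_sup u.2 (K.neg_mem (K.orthogonalProjection (u : H)).2)
    let ψ : ↥S.domain →ₗ[ℂ] ↥M := φ.codRestrict M hφmem
    have hψinj : Function.Injective ψ := by
      intro a b hab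
      have h0' : φ a = φ b := congrArg Subtype.val hab
      have h0 : φ (a - b) = 0 := by rw [map_sub, h0', sub_self]
      have h1 : ((a - b : ↥S.domain) : H)
          = (K.orthogonalProjection ((a - b : ↥S.domain) : H) : H) := sub_eq_zero.mp h0
      have h2 : ((a - b : ↥S.domain) : H) ∈ K := by
        rw [h1]; exact (K.orthogonalProjection _).2
      have h3 := hDK _ (a - b).2 h2
      have h4 : a - b = 0 := Subtype.ext h3
      exact sub_eq_zero.mp h4
    exact hD0inf (FiniteDimensional.of_injective ψ hψinj)
  have hFdominf : ¬ FiniteDimensional ℂ S_F.domain := fun _ =>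
    hD0inf (Submodule.finiteDimensional_of_le hFext.1)
  -- nonemptiness of the two min-max sets
  have hFne : ∀ j : ℕ, {c : ℝ | ∃ W : Submodule ℂ H, W ≤ S_F.domain ∧
      Module.finrank ℂ ↥W = j ∧ ∀ (x : H) (hx : x ∈ S_F.domain), x ∈ W →
        (⟪x, S_F ⟨x, hx⟩⟫).re ≤ c * ‖x‖ ^ 2}.Nonempty := by
    intro j
    obtain ⟨W, hWD, hWfin, hWj⟩ := aux_exists_finrank S_F.domain hFdominf j
    obtain ⟨c, hc⟩ := aux_bound S_F W hWD
    exact ⟨c, W, hWD, hWj, hc⟩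
  have hKne : ∀ j : ℕ, {c : ℝ | ∃ W : Submodule ℂ H, W ≤ M ∧
      Module.finrank ℂ ↥W = j ∧ ∀ (x : H) (hx : x ∈ S_K.domain), x ∈ W →
        (⟪x, S_K ⟨x, hx⟩⟫).re ≤ c * ‖x‖ ^ 2}.Nonempty := by
    intro j
    obtain ⟨W, hWD, hWfin, hWj⟩ := aux_exists_finrank M hMinf j
    obtain ⟨c, hc⟩ := aux_bound S_K W (hWD.trans inf_le_left)
    exact ⟨c, W, hWD, hWj, hc⟩
  -- ε is a lower bound for the Friedrichs min-max set
  have hFlb : ∀ j : ℕ, 1 ≤ j → ∀ c ∈ {c : ℝ | ∃ W : Submodule ℂ H, W ≤ S_F.domain ∧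
      Module.finrank ℂ ↥W = j ∧ ∀ (x : H) (hx : x ∈ S_F.domain), x ∈ W →
        (⟪x, S_F ⟨x, hx⟩⟫).re ≤ c * ‖x‖ ^ 2}, ε ≤ c := by
    rintro j hj c ⟨W, hWD, hWj, hWc⟩
    have hWne : W ≠ ⊥ := by
      intro h; rw [h, finrank_bot] at hWj; omega
    obtain ⟨x, hxW, hx0⟩ := Submodule.exists_mem_ne_zero_of_ne_bot hWne
    have hx := hWD hxW
    have h1 := hFbound ⟨x, hx⟩
    have h2 := hWc x hx hxW
    have hn : 0 < ‖x‖ := norm_pos_iff.mpr hx0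
    nlinarith [mul_pos hn hn, h1, h2]
  -- the key inclusion of min-max sets
  have hsub : ∀ j : ℕ, 1 ≤ j → {c : ℝ | ∃ W : Submodule ℂ H, W ≤ M ∧
      Module.finrank ℂ ↥W = j ∧ ∀ (x : H) (hx : x ∈ S_K.domain), x ∈ W →
        (⟪x, S_K ⟨x, hx⟩⟫).re ≤ c * ‖x‖ ^ 2} ⊆
      {c : ℝ | ∃ W : Submodule ℂ H, W ≤ S_F.domain ∧
      Module.finrank ℂ ↥W = j ∧ ∀ (x : H) (hx : x ∈ S_F.domain), x ∈ W →
        (⟪x, S_F ⟨x, hx⟩⟫).re ≤ c * ‖x‖ ^ 2} := by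
    rintro j hj c ⟨W, hWM, hWj, hWc⟩
    have hWne : W ≠ ⊥ := by
      intro h; rw [h, finrank_bot] at hWj; omega
    obtain ⟨v0, hv0W, hv00⟩ := Submodule.exists_mem_ne_zero_of_ne_bot hWne
    have hv0K : v0 ∈ S_K.domain := (Submodule.mem_inf.mp (hWM hv0W)).1
    have hc0 : 0 ≤ c := by
      have h1 := hKnn ⟨v0, hv0K⟩
      have h2 := hWc v0 hv0K hv0W
      have hn : 0 < ‖v0‖ := norm_pos_iff.mpr hv00
      nlinarith [mul_pos hn hn, h1, h2]
    have hdec : ∀ v : ↥W, ∃ u, u ∈ S.domain ∧ (v : H) - u ∈ K := by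
      intro v
      have hv : (v : H) ∈ S_K.domain := (Submodule.mem_inf.mp (hWM v.2)).1
      rw [hdomK] at hv
      obtain ⟨u, hu, w, hw, huw⟩ := Submodule.mem_sup.mp hv
      exact ⟨u, hu, by rw [← huw]; simpa using hw⟩
    set uf : ↥W → H := fun v => (hdec v).choose with hufdef
    have hufD : ∀ v : ↥W, uf v ∈ S.domain := fun v => (hdec v).choose_spec.1
    have hufK : ∀ v : ↥W, (v : H) - uf v ∈ K := fun v => (hdec v).choose_spec.2
    have huf_eq : ∀ (v : ↥W) (u : H), u ∈ S.domain → (v : H) - u ∈ K → uf v = u :=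
      fun v u hu hk => huniq (v : H) (uf v) u (hufD v) hu (hufK v) hk
    let P : ↥W →ₗ[ℂ] H :=
      { toFun := uf
        map_add' := by
          intro a b
          refine huf_eq (a + b) _ (S.domain.add_mem (hufD a) (hufD b)) ?_
          have h := K.add_mem (hufK a) (hufK b)
          have heq : ((a : H) - uf a) + ((b : H) - uf b)
              = ((a + b : ↥W) : H) - (uf a + uf b) := by push_cast; abel
          rwa [heq] at h
        map_smul' := by
          intro m a
          refine huf_eq (m • a) _ (S.domain.smul_mem m (hufD a)) ?_
          have h := K.smul_mem m (hufK a)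
          have heq : m • ((a : H) - uf a) = ((m • a : ↥W) : H) - m • uf a := by
            push_cast; rw [smul_sub]
          rwa [heq] at h }
    have hP0 : ∀ v : ↥W, P v = 0 → v = 0 := by
      intro v hv
      have h1 : (v : H) ∈ K := by
        have h0 : uf v = 0 := hv
        have h := hufK v
        rw [h0, sub_zero] at h
        exact h
      have h2 : (v : H) ∈ Kᗮ := (Submodule.mem_inf.mp (hWM v.2)).2
      have h3 : (⟪(v : H), (v : H)⟫ : ℂ) = 0 :=
        (Submodule.mem_orthogonal K (v : H)).mp h2 (v : H) h1
      exact Subtype.ext (inner_self_eq_zero.mp h3)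
    have hPinj : Function.Injective P := by
      intro a b hab
      have h : P (a - b) = 0 := by rw [map_sub, hab, sub_self]
      have h2 := hP0 _ h
      rwa [sub_eq_zero] at h2
    refine ⟨LinearMap.range P, ?_, ?_, ?_⟩
    · rintro x ⟨v, rfl⟩
      exact hFext.1 (hufD v)
    · rw [LinearMap.finrank_range_of_inj hPinj, hWj]
    · intro x hx hxr
      obtain ⟨v, rfl⟩ := hxr
      have huD : P v ∈ S.domain := hufD v
      have hwK : (v : H) - P v ∈ K := hufK v
      have hvK : (v : H) ∈ S_K.domain := (Submodule.mem_inf.mp (hWM v.2)).1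
      have hvO : (v : H) ∈ Kᗮ := (Submodule.mem_inf.mp (hWM v.2)).2
      have huK : P v ∈ S_K.domain := hKext.1 huD
      have hwKd : (v : H) - P v ∈ S_K.domain := by
        rw [hdomK]; exact Submodule.mem_sup_right hwK
      have hsplit : (⟨(v : H), hvK⟩ : ↥S_K.domain)
          = ⟨P v, huK⟩ + ⟨(v : H) - P v, hwKd⟩ := by
        apply Subtype.ext
        show (v : H) = P v + ((v : H) - P v)
        abel
      have hSKv : S_K ⟨(v : H), hvK⟩ = S_K ⟨P v, huK⟩ := by
        rw [hsplit, S_K.map_add, hK0 ⟨(v : H) - P v, hwKd⟩ hwK, add_zero]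
      have hSu : S ⟨P v, huD⟩ = S_K ⟨P v, huK⟩ := hKext.2 rfl
      have hSF : S ⟨P v, huD⟩ = S_F ⟨P v, hx⟩ := hFext.2 rfl
      have hinner : (⟪(v : H), S_K ⟨(v : H), hvK⟩⟫).re = (⟪(P v : H), S ⟨P v, huD⟩⟫).re := by
        rw [hSKv, ← hSu]
        have hsplit2 : ⟪(v : H), S ⟨P v, huD⟩⟫
            = ⟪(P v : H), S ⟨P v, huD⟩⟫ + ⟪(v : H) - P v, S ⟨P v, huD⟩⟫ := by
          rw [← inner_add_left]; congr 1; abel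
        have hz : ⟪(v : H) - P v, S ⟨P v, huD⟩⟫ = 0 := by
          rw [← inner_conj_symm, (hKmem _).mp hwK ⟨P v, huD⟩]; simp
        rw [hsplit2, hz, add_zero]
      have hray := hWc (v : H) hvK v.2
      have hnorm : ‖(v : H)‖ ^ 2 ≤ ‖(P v : H)‖ ^ 2 := by
        have h2 : (⟪(v : H), (v : H) - P v⟫ : ℂ) = 0 := by
          rw [← inner_conj_symm,
            (Submodule.mem_orthogonal K (v : H)).mp hvO _ hwK]
          simp
        have h1 : ‖(v : H) - ((v : H) - P v)‖ ^ 2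
            = ‖(v : H)‖ ^ 2 - 2 * (⟪(v : H), (v : H) - P v⟫ : ℂ).re
              + ‖(v : H) - P v‖ ^ 2 := by
          have := norm_sub_sq (𝕜 := ℂ) (v : H) ((v : H) - P v)
          exact this
        rw [h2] at h1
        simp only [Complex.zero_re, mul_zero, sub_zero, sub_sub_cancel] at h1
        nlinarith [sq_nonneg ‖(v : H) - P v‖]
      have hfin : (⟪(P v : H), S ⟨P v, huD⟩⟫).re ≤ c * ‖(v : H)‖ ^ 2 := hinner ▸ hray
      calc (⟪(P v : H), S_F ⟨P v, hx⟩⟫).re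
          = (⟪(P v : H), S ⟨P v, huD⟩⟫).re := by rw [← hSF]
        _ ≤ c * ‖(v : H)‖ ^ 2 := hfin
        _ ≤ c * ‖(P v : H)‖ ^ 2 := mul_le_mul_of_nonneg_left hnorm hc0
  have hmain : ∀ j : ℕ, 1 ≤ j →
      ε ≤ minmaxVal S_F S_F.domain j ∧
        minmaxVal S_F S_F.domain j ≤ minmaxVal S_K (S_K.domain ⊓ (adjKerD S)ᗮ) j := by
    intro j hj
    constructor
    · exact le_csInf (hFne j) (hFlb j hj)
    · exact csInf_le_csInf ⟨ε, hFlb j hj⟩ (hKne j) (hsub j hj)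
  refine ⟨hmain, fun h => ?_⟩
  refine tendsto_atTop_mono' atTop ?_ h
  filter_upwards [eventually_ge_atTop 1] with j hj
  exact (hmain j hj).2
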